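/- Let L₁/K and L₂/K be abelian extensions of a p-adic field K with L₁/K unramified, L₁ ∩ L₂ = K, and L = L₁L₂ of odd degree, both weakly ramified. If x₁ is a self-dual integral normal basis generator of A_{L₁/K} = O_{L₁} and x₂ of A_{L₂/K}, then x₁x₂ is a self-dual integral normal basis generator of A_{L/K}. -/

import Mathlib

open scoped Classical
set_option synthInstance.maxHeartbeats 1000000

set_option maxHeartbeats 1000000

theorem aux_mul_dvd_mul {α : Type*} [CommMonoidWithZero α] [UniqueFactorizationMonoid α]
    [NormalizationMonoid α] {a b : α} (ha : a ≠ 0) (hb : b ≠ 0) (h : a * a ∣ b * b) : a ∣ b := by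
  rw [UniqueFactorizationMonoid.dvd_iff_normalizedFactors_le_normalizedFactors
      (mul_ne_zero ha ha) (mul_ne_zero hb hb),
      UniqueFactorizationMonoid.normalizedFactors_mul ha ha,
      UniqueFactorizationMonoid.normalizedFactors_mul hb hb] at h
  rw [UniqueFactorizationMonoid.dvd_iff_normalizedFactors_le_normalizedFactors ha hb]
  rw [Multiset.le_iff_count] at h ⊢
  intro x
  have := h x
  simp only [Multiset.count_add] at this
  omega

theorem aux_frac_le_one {R F : Type*} [CommRing R] [IsDedekindDomain R] [Field F] [Algebra R F]
    [IsFractionRing R F] {I : FractionalIdeal (nonZeroDivisors R) F} (h : I * I ≤ 1) : I ≤ 1 := by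
  rcases eq_or_ne I 0 with rfl | hI0
  · exact FractionalIdeal.zero_le _
  obtain ⟨a, J, ha, rfl⟩ := FractionalIdeal.exists_eq_spanSingleton_mul I
  set S := FractionalIdeal.spanSingleton (nonZeroDivisors R) (algebraMap R F a) with hS
  set T := FractionalIdeal.spanSingleton (nonZeroDivisors R) ((algebraMap R F a)⁻¹) with hT
  have haF : (algebraMap R F) a ≠ 0 := by
    simpa using fun hc => ha (IsFractionRing.injective R F (by simpa using hc))
  have hST : S * T = 1 := by
    rw [hS, hT, FractionalIdeal.spanSingleton_mul_spanSingleton, mul_inv_cancel₀ haF,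
      FractionalIdeal.spanSingleton_one]
  have hJ0 : J ≠ 0 := by
    rintro rfl; simp at hI0
  have key : (J * J : Ideal R) ≤ Ideal.span {a * a} := by
    rw [← FractionalIdeal.coeIdeal_le_coeIdeal F, FractionalIdeal.coeIdeal_mul,
      FractionalIdeal.coeIdeal_span_singleton]
    have h2 : S * (S * (T * ↑J * (T * ↑J))) ≤ S * (S * 1) :=
      mul_right_mono (a := S) (mul_right_mono (a := S) h)
    calc (J : FractionalIdeal (nonZeroDivisors R) F) * J
        = (S * T) * (S * T) * (J * J) := by rw [hST]; ring
      _ = S * (S * (T * ↑J * (T * ↑J))) := by ring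
      _ ≤ S * (S * 1) := h2
      _ = FractionalIdeal.spanSingleton (nonZeroDivisors R) (algebraMap R F (a * a)) := by
          rw [mul_one, hS, FractionalIdeal.spanSingleton_mul_spanSingleton, map_mul]
  have hdvd : Ideal.span {a} * Ideal.span {a} ∣ J * J := by
    rw [← Ideal.span_singleton_mul_span_singleton] at key
    exact Ideal.dvd_iff_le.mpr key
  have hJa : J ≤ Ideal.span {a} :=
    Ideal.le_of_dvd (aux_mul_dvd_mul (by simpa using ha) hJ0 hdvd)
  calc T * ↑J ≤ T * ↑(Ideal.span {a}) :=
        mul_right_mono (a := T) ((FractionalIdeal.coeIdeal_le_coeIdeal F).mpr hJa)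
    _ = T * S := by rw [FractionalIdeal.coeIdeal_span_singleton]
    _ = 1 := by rw [mul_comm]; exact hST

theorem aux_sq_mem {R F : Type*} [CommRing R] [IsDedekindDomain R] [Field F] [Algebra R F]
    [IsFractionRing R F] {A : Submodule R F} (hfr : IsFractional (nonZeroDivisors R) A)
    (hA0 : A ≠ ⊥) {z : F} (hz : z * z ∈ A * A) : z ∈ A := by
  rcases eq_or_ne z 0 with rfl | hz0
  · exact A.zero_mem
  set Af : FractionalIdeal (nonZeroDivisors R) F := ⟨A, hfr⟩ with hAf
  have hAf0 : Af ≠ 0 := by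
    intro hc
    exact hA0 (FractionalIdeal.coeToSubmodule_eq_bot.mpr hc)
  have hzA : FractionalIdeal.spanSingleton (nonZeroDivisors R) (z * z) ≤ Af * Af := by
    rw [FractionalIdeal.spanSingleton_le_iff_mem]
    rw [← FractionalIdeal.mem_coe, FractionalIdeal.coe_mul]
    exact hz
  set I := FractionalIdeal.spanSingleton (nonZeroDivisors R) z * Af⁻¹ with hI
  have hII : I * I ≤ 1 := by
    have heq : I * I = FractionalIdeal.spanSingleton (nonZeroDivisors R) z *
        FractionalIdeal.spanSingleton (nonZeroDivisors R) z * (Af⁻¹ * Af⁻¹) := by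
      rw [hI]; ring
    rw [FractionalIdeal.spanSingleton_mul_spanSingleton] at heq
    rw [heq]
    calc FractionalIdeal.spanSingleton (nonZeroDivisors R) (z * z) * (Af⁻¹ * Af⁻¹)
        ≤ Af * Af * (Af⁻¹ * Af⁻¹) := mul_left_mono (a := Af⁻¹ * Af⁻¹) hzA
      _ = (Af * Af⁻¹) * (Af * Af⁻¹) := by ring
      _ = 1 := by rw [mul_inv_cancel₀ hAf0, one_mul]
  have hI1 : I ≤ 1 := aux_frac_le_one hII
  have h4 := mul_left_mono (a := Af) hI1
  simp only [hI, one_mul] at h4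
  rw [mul_assoc, mul_comm Af⁻¹ Af, mul_inv_cancel₀ hAf0, mul_one] at h4
  exact FractionalIdeal.spanSingleton_le_iff_mem.mp h4


/-- Let `L₁/K`, `L₂/K` be abelian extensions of a `p`-adic field `K` with
`L₁/K` unramified (encoded: the trace dual of `O_{L₁}` is `O_{L₁}`, i.e. `A_{L₁/K} = O_{L₁}`),
`L₁ ∩ L₂ = K`, and `L = L₁L₂` of odd degree. If `x₁` is a self-dual integral normal basis
generator of `A_{L₁/K} = O_{L₁}` and `x₂` one of `A_{L₂/K}` (the square root of the inverse
different of `L₂/K`), then `x₁x₂` is a self-dual integral normal basis generator of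
`A_{L/K}`. -/
theorem stmt_18 (p : ℕ) [Fact p.Prime]
    (K : Type*) [Field K] [Algebra ℚ_[p] K] [FiniteDimensional ℚ_[p] K]
    [Algebra ℤ_[p] K] [IsScalarTower ℤ_[p] ℚ_[p] K]
    (L : Type*) [Field L] [Algebra K L] [FiniteDimensional K L] [IsGalois K L]
    [Algebra ℤ_[p] L] [IsScalarTower ℤ_[p] K L]
    (hodd : Odd (Module.finrank K L))
    (hab : ∀ σ τ : L ≃ₐ[K] L, σ * τ = τ * σ)
    (L₁ L₂ : IntermediateField K L)
    [Algebra ℤ_[p] L₁] [IsScalarTower ℤ_[p] K L₁]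
    [Algebra ℤ_[p] L₂] [IsScalarTower ℤ_[p] K L₂]
    [IsGalois K L₁] [IsGalois K L₂]
    (hinf : L₁ ⊓ L₂ = ⊥) (hsup : L₁ ⊔ L₂ = ⊤)
    -- `L₁/K` is unramified: the inverse different of `L₁/K` is `O_{L₁}` itself
    (hunram : ∀ z : L₁,
      (∀ y : L₁, y ∈ integralClosure ℤ_[p] L₁ →
        Algebra.trace K L₁ (z * y) ∈ integralClosure ℤ_[p] K) ↔
      z ∈ integralClosure ℤ_[p] L₁)
    -- `x₁` is a self-dual integral normal basis generator of `O_{L₁}`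
    (x₁ : L₁) (hx₁int : x₁ ∈ integralClosure ℤ_[p] L₁)
    (hx₁gen : ∀ z : L₁, z ∈ integralClosure ℤ_[p] L₁ ↔
      ∃ c : (L₁ ≃ₐ[K] L₁) → K, (∀ g, c g ∈ integralClosure ℤ_[p] K) ∧
        z = ∑ g : L₁ ≃ₐ[K] L₁, c g • g x₁)
    (hx₁sd : ∀ g h : L₁ ≃ₐ[K] L₁,
      Algebra.trace K L₁ (g x₁ * h x₁) = if g = h then 1 else 0)
    -- `A₂ = A_{L₂/K}` and `x₂` a self-dual integral normal basis generator of it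
    (A₂ : Submodule (integralClosure ℤ_[p] L₂) L₂)
    (hA₂ : ∀ z : L₂, z ∈ A₂ * A₂ ↔
      ∀ y : L₂, y ∈ integralClosure ℤ_[p] L₂ →
        Algebra.trace K L₂ (z * y) ∈ integralClosure ℤ_[p] K)
    (x₂ : L₂) (hx₂A : x₂ ∈ A₂)
    (hx₂gen : (A₂ : Set L₂) = {z : L₂ | ∃ c : (L₂ ≃ₐ[K] L₂) → K,
      (∀ g, c g ∈ integralClosure ℤ_[p] K) ∧ z = ∑ g : L₂ ≃ₐ[K] L₂, c g • g x₂})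
    (hx₂sd : ∀ g h : L₂ ≃ₐ[K] L₂,
      Algebra.trace K L₂ (g x₂ * h x₂) = if g = h then 1 else 0)
    -- `A = A_{L/K}`
    (A : Submodule (integralClosure ℤ_[p] L) L)
    (hA : ∀ z : L, z ∈ A * A ↔
      ∀ y : L, y ∈ integralClosure ℤ_[p] L →
        Algebra.trace K L (z * y) ∈ integralClosure ℤ_[p] K) :
    ((x₁ : L) * (x₂ : L)) ∈ A ∧
    (A : Set L) = {z : L | ∃ c : (L ≃ₐ[K] L) → K,
      (∀ g, c g ∈ integralClosure ℤ_[p] K) ∧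
      z = ∑ g : L ≃ₐ[K] L, c g • g ((x₁ : L) * (x₂ : L))} ∧
    ∀ g h : L ≃ₐ[K] L,
      Algebra.trace K L (g ((x₁ : L) * (x₂ : L)) * h ((x₁ : L) * (x₂ : L))) =
        if g = h then 1 else 0 := by
  classical
  -- ## algebra instances
  letI : Algebra ℚ_[p] L := ((algebraMap K L).comp (algebraMap ℚ_[p] K)).toAlgebra
  haveI : IsScalarTower ℚ_[p] K L := IsScalarTower.of_algebraMap_eq fun x => rfl
  haveI : IsScalarTower ℤ_[p] ℚ_[p] L := IsScalarTower.of_algebraMap_eq fun x => by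
    rw [IsScalarTower.algebraMap_apply ℤ_[p] K L, IsScalarTower.algebraMap_apply ℤ_[p] ℚ_[p] K,
      ← IsScalarTower.algebraMap_apply ℚ_[p] K L]
  haveI : FiniteDimensional ℚ_[p] L := FiniteDimensional.trans ℚ_[p] K L
  haveI : CharZero L := charZero_of_injective_algebraMap (algebraMap ℚ_[p] L).injective
  haveI : Algebra.IsAlgebraic ℚ_[p] L := Algebra.IsAlgebraic.of_finite ℚ_[p] L
  haveI : IsDedekindDomain ↥(integralClosure ℤ_[p] L) :=
    integralClosure.isDedekindDomain ℤ_[p] ℚ_[p] L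
  haveI : IsFractionRing ↥(integralClosure ℤ_[p] L) L :=
    integralClosure.isFractionRing_of_finite_extension ℚ_[p] L
  haveI : IsScalarTower ℤ_[p] ↥L₂ L := IsScalarTower.of_algebraMap_eq fun x => by
    rw [IsScalarTower.algebraMap_apply ℤ_[p] K L, IsScalarTower.algebraMap_apply ℤ_[p] K ↥L₂,
      ← IsScalarTower.algebraMap_apply K ↥L₂ L]
  haveI : IsScalarTower ℤ_[p] ↥L₁ L := IsScalarTower.of_algebraMap_eq fun x => by
    rw [IsScalarTower.algebraMap_apply ℤ_[p] K L, IsScalarTower.algebraMap_apply ℤ_[p] K ↥L₁,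
      ← IsScalarTower.algebraMap_apply K ↥L₁ L]
  have hinjL : Function.Injective (algebraMap ℤ_[p] L) := by
    rw [IsScalarTower.algebraMap_eq ℤ_[p] ℚ_[p] L]
    exact (algebraMap ℚ_[p] L).injective.comp (IsFractionRing.injective ℤ_[p] ℚ_[p])
  -- ## restriction maps
  set res₁ : (L ≃ₐ[K] L) →* (↥L₁ ≃ₐ[K] ↥L₁) := AlgEquiv.restrictNormalHom ↥L₁ with hres₁def
  set res₂ : (L ≃ₐ[K] L) →* (↥L₂ ≃ₐ[K] ↥L₂) := AlgEquiv.restrictNormalHom ↥L₂ with hres₂def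
  have hres₁ : ∀ (g : L ≃ₐ[K] L) (a : ↥L₁), ((res₁ g a : ↥L₁) : L) = g ↑a := fun g a =>
    AlgEquiv.restrictNormalHom_apply L₁ g a
  have hres₂ : ∀ (g : L ≃ₐ[K] L) (b : ↥L₂), ((res₂ g b : ↥L₂) : L) = g ↑b := fun g b =>
    AlgEquiv.restrictNormalHom_apply L₂ g b
  -- ## an automorphism fixing L₁ and L₂ is trivial
  have hfix : ∀ g : L ≃ₐ[K] L, (∀ a : ↥L₁, g ↑a = ↑a) → (∀ b : ↥L₂, g ↑b = ↑b) → g = 1 := by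
    intro g h1 h2
    have hmemfix : ∀ x : L, g x = x → x ∈ IntermediateField.fixedField (Subgroup.zpowers g) := by
      intro x hx
      have hzn : ∀ n : ℤ, (g ^ n) x = x := by
        intro n
        induction n using Int.induction_on with
        | zero => simp
        | succ n ih => rw [zpow_add_one, AlgEquiv.mul_apply, hx, ih]
        | pred n ih =>
          have hinv : g⁻¹ x = x := by
            have h5 : g⁻¹ (g x) = g⁻¹ x := by rw [hx]
            rw [← AlgEquiv.mul_apply, inv_mul_cancel, AlgEquiv.one_apply] at h5
            exact h5.symm
          rw [zpow_sub_one, AlgEquiv.mul_apply, hinv, ih]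
      rintro ⟨σ, hσ⟩
      obtain ⟨n, rfl⟩ := Subgroup.mem_zpowers_iff.mp hσ
      exact hzn n
    have hsub : (⊤ : IntermediateField K L) ≤ IntermediateField.fixedField (Subgroup.zpowers g) := by
      rw [← hsup]
      apply sup_le
      · intro x hx; exact hmemfix x (h1 ⟨x, hx⟩)
      · intro x hx; exact hmemfix x (h2 ⟨x, hx⟩)
    apply AlgEquiv.ext
    intro x
    have := hsub (IntermediateField.mem_top (x := x)) ⟨g, Subgroup.mem_zpowers g⟩
    exact this
  -- ## the isomorphism Gal(L/L₂) ≃ Gal(L₁/K)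
  let ρ : (L ≃ₐ[↥L₂] L) →* (↥L₁ ≃ₐ[K] ↥L₁) :=
    { toFun := fun σ => res₁ (AlgEquiv.restrictScalars K σ)
      map_one' := by
        show res₁ (AlgEquiv.restrictScalars K (1 : L ≃ₐ[↥L₂] L)) = 1
        have h : AlgEquiv.restrictScalars K (1 : L ≃ₐ[↥L₂] L) = 1 := by ext x; rfl
        rw [h, map_one]
      map_mul' := fun σ τ => by
        show res₁ (AlgEquiv.restrictScalars K (σ * τ)) = _
        have h : AlgEquiv.restrictScalars K (σ * τ) =
            AlgEquiv.restrictScalars K σ * AlgEquiv.restrictScalars K τ := by ext x; rfl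
        rw [h, map_mul] }
  have hρ : ∀ (σ : L ≃ₐ[↥L₂] L) (a : ↥L₁), ((ρ σ a : ↥L₁) : L) = σ ↑a := fun σ a =>
    hres₁ (AlgEquiv.restrictScalars K σ) a
  have hρinj : Function.Injective ρ := by
    rw [injective_iff_map_eq_one]
    intro σ hσ1
    have h1 : ∀ a : ↥L₁, (AlgEquiv.restrictScalars K σ) ↑a = ↑a := fun a => by
      have := hρ σ a
      rw [hσ1] at this
      simpa using this.symm
    have h2 : ∀ b : ↥L₂, (AlgEquiv.restrictScalars K σ) ↑b = ↑b := fun b => by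
      have := σ.commutes b
      simpa [IntermediateField.algebraMap_apply] using this
    have hone := hfix _ h1 h2
    apply AlgEquiv.ext
    intro x
    exact AlgEquiv.ext_iff.mp hone x
  have hbotfix₁ : IntermediateField.fixingSubgroup (⊥ : IntermediateField K ↥L₁) = ⊤ := by
    ext σ
    simp only [Subgroup.mem_top, iff_true]
    rw [IntermediateField.mem_fixingSubgroup_iff]
    intro x hx
    rw [IntermediateField.mem_bot] at hx
    obtain ⟨k, rfl⟩ := hx
    exact σ.commutes k
  have hbotfix₂ : IntermediateField.fixingSubgroup (⊥ : IntermediateField ↥L₂ L) = ⊤ := by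
    ext σ
    simp only [Subgroup.mem_top, iff_true]
    rw [IntermediateField.mem_fixingSubgroup_iff]
    intro x hx
    rw [IntermediateField.mem_bot] at hx
    obtain ⟨k, rfl⟩ := hx
    exact σ.commutes k
  have hρsurj : Function.Surjective ρ := by
    have hFF : IntermediateField.fixedField ρ.range = (⊥ : IntermediateField K ↥L₁) := by
      apply le_antisymm _ bot_le
      intro a ha
      have hfixa : ∀ σ : L ≃ₐ[↥L₂] L, σ ↑a = ↑a := by
        intro σ
        have hmem : ρ σ ∈ ρ.range := ⟨σ, rfl⟩
        have := ha ⟨ρ σ, hmem⟩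
        calc σ ↑a = ↑(ρ σ a) := (hρ σ a).symm
          _ = ↑a := by rw [show ρ σ a = a from this]
      have h2 : (↑a : L) ∈ (⊥ : IntermediateField ↥L₂ L) := by
        rw [← IsGalois.fixedField_fixingSubgroup (⊥ : IntermediateField ↥L₂ L), hbotfix₂]
        rintro ⟨σ, -⟩
        exact hfixa σ
      rw [IntermediateField.mem_bot] at h2
      obtain ⟨b, hb⟩ := h2
      have hmem2 : (↑a : L) ∈ L₂ := by
        rw [← hb, IntermediateField.algebraMap_apply]
        exact b.2
      have hmeminf : (↑a : L) ∈ L₁ ⊓ L₂ := ⟨a.2, hmem2⟩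
      rw [hinf, IntermediateField.mem_bot] at hmeminf
      obtain ⟨k, hk⟩ := hmeminf
      rw [IntermediateField.mem_bot]
      refine ⟨k, ?_⟩
      apply Subtype.ext
      rw [← hk]
      exact (IsScalarTower.algebraMap_apply K ↥L₁ L k).symm
    have hrange := IntermediateField.fixingSubgroup_fixedField ρ.range
    rw [hFF, hbotfix₁] at hrange
    intro τ
    have : τ ∈ ρ.range := by rw [← hrange]; trivial
    exact this
  -- ## trace formulas
  have ht1 : ∀ a : ↥L₁, Algebra.trace ↥L₂ L ↑a = algebraMap K ↥L₂ (Algebra.trace K ↥L₁ a) := by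
    intro a
    apply (algebraMap ↥L₂ L).injective
    calc algebraMap ↥L₂ L (Algebra.trace ↥L₂ L ↑a)
        = ∑ σ : L ≃ₐ[↥L₂] L, σ ↑a := trace_eq_sum_automorphisms _
      _ = ∑ σ : L ≃ₐ[↥L₂] L, ((ρ σ a : ↥L₁) : L) := by
          exact Finset.sum_congr rfl fun σ _ => (hρ σ a).symm
      _ = ∑ τ : ↥L₁ ≃ₐ[K] ↥L₁, ((τ a : ↥L₁) : L) :=
          Fintype.sum_bijective ρ ⟨hρinj, hρsurj⟩ _ _ (fun σ => rfl)
      _ = algebraMap ↥L₁ L (∑ τ : ↥L₁ ≃ₐ[K] ↥L₁, τ a) := by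
          rw [map_sum]
          exact Finset.sum_congr rfl fun τ _ => by rw [IntermediateField.algebraMap_apply]
      _ = algebraMap ↥L₁ L (algebraMap K ↥L₁ (Algebra.trace K ↥L₁ a)) := by
          rw [trace_eq_sum_automorphisms]
      _ = algebraMap K L (Algebra.trace K ↥L₁ a) :=
          (IsScalarTower.algebraMap_apply K ↥L₁ L _).symm
      _ = algebraMap ↥L₂ L (algebraMap K ↥L₂ (Algebra.trace K ↥L₁ a)) :=
          IsScalarTower.algebraMap_apply K ↥L₂ L _
  have ht2 : ∀ (a : ↥L₁) (b : ↥L₂),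
      Algebra.trace K L (↑a * ↑b) = Algebra.trace K ↥L₁ a * Algebra.trace K ↥L₂ b := by
    intro a b
    have h0 : (↑a * ↑b : L) = b • (↑a : L) := by
      rw [Algebra.smul_def, IntermediateField.algebraMap_apply]
      ring
    rw [← Algebra.trace_trace (R := K) (S := ↥L₂) (T := L), h0, map_smul, ht1 a]
    have h1 : b • algebraMap K ↥L₂ (Algebra.trace K ↥L₁ a) = (Algebra.trace K ↥L₁ a) • b := by
      rw [smul_eq_mul, Algebra.smul_def, mul_comm]
    rw [h1, map_smul, smul_eq_mul]
  -- ## the self-duality (part 3)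
  set X : L := ↑x₁ * ↑x₂ with hXdef
  have hval : ∀ g : L ≃ₐ[K] L, g X = ↑(res₁ g x₁) * ↑(res₂ g x₂) := fun g => by
    rw [hXdef, map_mul, hres₁, hres₂]
  have hpairinj : ∀ g h : L ≃ₐ[K] L, res₁ g = res₁ h → res₂ g = res₂ h → g = h := by
    intro g h e1 e2
    have h1 : res₁ (h⁻¹ * g) = 1 := by rw [map_mul, map_inv, e1, inv_mul_cancel]
    have h2 : res₂ (h⁻¹ * g) = 1 := by rw [map_mul, map_inv, e2, inv_mul_cancel]
    have hone := hfix (h⁻¹ * g)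
      (fun a => by rw [← hres₁ (h⁻¹ * g) a, h1]; rfl)
      (fun b => by rw [← hres₂ (h⁻¹ * g) b, h2]; rfl)
    have : g = h * 1 := by rw [← hone]; group
    simpa using this
  have hsd : ∀ g h : L ≃ₐ[K] L, Algebra.trace K L (g X * h X) = if g = h then 1 else 0 := by
    intro g h
    have hprod : g X * h X = ↑(res₁ g x₁ * res₁ h x₁) * ↑(res₂ g x₂ * res₂ h x₂) := by
      rw [hval g, hval h]
      push_cast
      ring
    rw [hprod, ht2, hx₁sd, hx₂sd]
    by_cases hgh : g = h
    · subst hgh; simp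
    · rw [if_neg hgh]
      by_cases e1 : res₁ g = res₁ h
      · by_cases e2 : res₂ g = res₂ h
        · exact absurd (hpairinj g h e1 e2) hgh
        · rw [if_neg e2, mul_zero]
      · rw [if_neg e1, zero_mul]
  -- ## the basis g ↦ g X and trace expansion
  have hv_li : LinearIndependent K (fun g : L ≃ₐ[K] L => g X) := by
    rw [linearIndependent_iff']
    intro s f hsum h hs
    have := congrArg (Algebra.trace K L) (congrArg (· * h X) hsum)
    simp only [zero_mul, map_zero] at this
    rw [Finset.sum_mul] at this
    simp only [smul_mul_assoc] at this
    rw [map_sum] at this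
    simp only [map_smul, hsd, smul_eq_mul, mul_ite, mul_one, mul_zero] at this
    rw [Finset.sum_ite_eq' s h f] at this
    rw [if_pos hs] at this
    exact this
  have hcard : Fintype.card (L ≃ₐ[K] L) = Module.finrank K L := Fintype.card_eq_nat_card.trans (IsGalois.card_aut_eq_finrank K L)
  set b : Module.Basis (L ≃ₐ[K] L) K L := basisOfLinearIndependentOfCardEqFinrank hv_li hcard with hbdef
  have hb : ∀ g : L ≃ₐ[K] L, b g = g X := fun g => by
    rw [hbdef, coe_basisOfLinearIndependentOfCardEqFinrank]
  have hrep : ∀ (w : L) (h : L ≃ₐ[K] L), b.repr w h = Algebra.trace K L (w * h X) := by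
    intro w h
    refine Eq.symm ?_
    conv_lhs => rw [← b.sum_repr w]
    rw [Finset.sum_mul]
    simp only [smul_mul_assoc]
    rw [map_sum]
    simp only [map_smul, smul_eq_mul]
    calc ∑ g : L ≃ₐ[K] L, b.repr w g * Algebra.trace K L (b g * h X)
        = ∑ g : L ≃ₐ[K] L, if g = h then b.repr w g else 0 := by
          refine Finset.sum_congr rfl fun g _ => ?_
          rw [hb g, hsd g h, mul_ite, mul_one, mul_zero]
      _ = b.repr w h := by rw [Finset.sum_ite_eq' Finset.univ h (b.repr w), if_pos (Finset.mem_univ h)]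
  have hw : ∀ w : L, w = ∑ g : L ≃ₐ[K] L, Algebra.trace K L (w * g X) • g X := by
    intro w
    conv_lhs => rw [← b.sum_repr w]
    exact Finset.sum_congr rfl fun g _ => by rw [hrep, hb]
  -- ## denominators
  have hdenom : ∀ w : L, ∃ y : ℤ_[p], y ≠ 0 ∧
      algebraMap ℤ_[p] L y * w ∈ integralClosure ℤ_[p] L := by
    intro w
    have halg : IsAlgebraic ℤ_[p] w :=
      (IsFractionRing.isAlgebraic_iff ℤ_[p] ℚ_[p] L).mpr (Algebra.IsAlgebraic.isAlgebraic w)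
    obtain ⟨y, hy, hint⟩ := halg.exists_integral_multiple
    exact ⟨y, hy, by rw [← Algebra.smul_def]; exact hint⟩
  choose dy hdy hdmem using fun g : L ≃ₐ[K] L => hdenom (g X)
  set e : ℤ_[p] := ∏ g : L ≃ₐ[K] L, dy g with hedef
  have he0 : e ≠ 0 := Finset.prod_ne_zero_iff.mpr fun g _ => hdy g
  have heX : ∀ g : L ≃ₐ[K] L, algebraMap ℤ_[p] L e * g X ∈ integralClosure ℤ_[p] L := by
    intro g
    rw [hedef, ← Finset.prod_erase_mul Finset.univ dy (Finset.mem_univ g), map_mul, mul_assoc]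
    exact mul_mem (Subalgebra.algebraMap_mem _ _) (hdmem g)
  -- ## basic facts about A
  have hIntTr : ∀ y : L, y ∈ integralClosure ℤ_[p] L →
      Algebra.trace K L y ∈ integralClosure ℤ_[p] K := fun y hy => Algebra.isIntegral_trace hy
  have h1A : (1 : L) ∈ A * A := (hA 1).mpr fun y hy => by rw [one_mul]; exact hIntTr y hy
  have hAne : A ≠ ⊥ := by
    intro hbot
    rw [hbot, Submodule.bot_mul] at h1A
    exact one_ne_zero ((Submodule.mem_bot _).mp h1A)
  have hmapint : ∀ c : K, c ∈ integralClosure ℤ_[p] K →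
      algebraMap K L c ∈ integralClosure ℤ_[p] L := by
    intro c hc
    have : IsIntegral ℤ_[p] c := hc
    exact this.map (IsScalarTower.toAlgHom ℤ_[p] K L)
  have htre : ∀ (z : L) (g : L ≃ₐ[K] L),
      Algebra.trace K L (z * (algebraMap ℤ_[p] L e * g X)) =
        algebraMap ℤ_[p] K e * Algebra.trace K L (z * g X) := by
    intro z g
    have h1 : z * (algebraMap ℤ_[p] L e * g X) = (algebraMap ℤ_[p] K e) • (z * g X) := by
      rw [Algebra.smul_def, ← IsScalarTower.algebraMap_apply]
      ring
    rw [h1, map_smul, smul_eq_mul]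
  have hbound : ∀ z ∈ A * A, algebraMap ℤ_[p] L (e * e) * z ∈ integralClosure ℤ_[p] L := by
    intro z hz
    have hz' := (hA z).mp hz
    have heq : algebraMap ℤ_[p] L (e * e) * z =
        ∑ g : L ≃ₐ[K] L, algebraMap K L (Algebra.trace K L (z * (algebraMap ℤ_[p] L e * g X))) *
          (algebraMap ℤ_[p] L e * g X) := by
      have : ∀ g : L ≃ₐ[K] L,
          algebraMap K L (Algebra.trace K L (z * (algebraMap ℤ_[p] L e * g X))) *
            (algebraMap ℤ_[p] L e * g X) =
          algebraMap ℤ_[p] L (e * e) * (Algebra.trace K L (z * g X) • g X) := by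
        intro g
        rw [htre,
          show algebraMap ℤ_[p] L (e * e) = algebraMap ℤ_[p] L e * algebraMap ℤ_[p] L e from
            map_mul _ _ _,
          show algebraMap K L (algebraMap ℤ_[p] K e * Algebra.trace K L (z * g X)) =
              algebraMap K L (algebraMap ℤ_[p] K e) * algebraMap K L (Algebra.trace K L (z * g X))
            from map_mul _ _ _,
          ← IsScalarTower.algebraMap_apply ℤ_[p] K L, Algebra.smul_def]
        ring
      rw [Finset.sum_congr rfl fun g _ => this g, ← Finset.mul_sum, ← hw z]
    rw [heq]
    refine Subalgebra.sum_mem _ fun g _ => ?_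
    exact mul_mem (hmapint _ (hz' _ (heX g))) (heX g)
  have hfrA : IsFractional (nonZeroDivisors ↥(integralClosure ℤ_[p] L)) A := by
    obtain ⟨a₀, ha₀A, ha₀ne⟩ := Submodule.exists_mem_ne_zero_of_ne_bot hAne
    obtain ⟨y₀, hy₀, hy₀mem⟩ := hdenom a₀
    have hsval : algebraMap ℤ_[p] L (e * e) * (algebraMap ℤ_[p] L y₀ * a₀) ∈
        integralClosure ℤ_[p] L :=
      mul_mem (Subalgebra.algebraMap_mem _ _) hy₀mem
    have hsne : algebraMap ℤ_[p] L (e * e) * (algebraMap ℤ_[p] L y₀ * a₀) ≠ 0 := by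
      apply mul_ne_zero
      · exact fun hc => mul_ne_zero he0 he0 (hinjL (by rwa [map_zero]))
      · exact mul_ne_zero (fun hc => hy₀ (hinjL (by rwa [map_zero]))) ha₀ne
    refine ⟨⟨_, hsval⟩, mem_nonZeroDivisors_of_ne_zero ?_, ?_⟩
    · exact fun hc => hsne (congrArg Subtype.val hc)
    · intro b hb
      refine ⟨⟨algebraMap ℤ_[p] L y₀ * (algebraMap ℤ_[p] L (e * e) * (a₀ * b)), ?_⟩, ?_⟩
      · exact mul_mem (Subalgebra.algebraMap_mem _ _)
          (hbound _ (Submodule.mul_mem_mul ha₀A hb))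
      · show algebraMap ℤ_[p] L y₀ * (algebraMap ℤ_[p] L (e * e) * (a₀ * b)) =
          (⟨_, hsval⟩ : ↥(integralClosure ℤ_[p] L)) • b
        rw [Subalgebra.smul_def, smul_eq_mul]
        push_cast
        ring
  -- ## each g X lies in A
  have hXA : ∀ g : L ≃ₐ[K] L, g X ∈ A := by
    intro g
    have hw₂A : res₂ g x₂ ∈ A₂ := by
      have hmem : res₂ g x₂ ∈ {z : ↥L₂ | ∃ c : (↥L₂ ≃ₐ[K] ↥L₂) → K,
          (∀ τ, c τ ∈ integralClosure ℤ_[p] K) ∧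
          z = ∑ τ : ↥L₂ ≃ₐ[K] ↥L₂, c τ • τ x₂} := by
        refine ⟨fun τ => if τ = res₂ g then 1 else 0, fun τ => ?_, ?_⟩
        · by_cases h : τ = res₂ g <;>
            simp [h, Subalgebra.one_mem, Subalgebra.zero_mem]
        · rw [Finset.sum_congr rfl (fun τ _ => by rw [ite_smul, one_smul, zero_smul]),
            Finset.sum_ite_eq' Finset.univ (res₂ g) (fun τ => τ x₂), if_pos (Finset.mem_univ _)]
      rw [← SetLike.mem_coe, hx₂gen]
      exact hmem
    have hw₂sq : (↑(res₂ g x₂) : L) * ↑(res₂ g x₂) ∈ A * A := by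
      apply (hA _).mpr
      intro y hy
      set w := res₂ g x₂ with hwdef
      have hty : IsIntegral ℤ_[p] (Algebra.trace ↥L₂ L y) := Algebra.isIntegral_trace hy
      have e1 : (↑w * ↑w : L) * y = (w * w) • y := by
        rw [Algebra.smul_def, map_mul, IntermediateField.algebraMap_apply]
      have e2 : Algebra.trace K L ((↑w * ↑w : L) * y) =
          Algebra.trace K ↥L₂ ((w * w) * Algebra.trace ↥L₂ L y) := by
        rw [← Algebra.trace_trace (R := K) (S := ↥L₂) (T := L), e1, map_smul, smul_eq_mul]
      rw [e2]
      exact (hA₂ (w * w)).mp (Submodule.mul_mem_mul hw₂A hw₂A) _ hty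
    have hw₂L : (↑(res₂ g x₂) : L) ∈ A := aux_sq_mem hfrA hAne hw₂sq
    have hw₁int : (↑(res₁ g x₁) : L) ∈ integralClosure ℤ_[p] L := by
      have h1 : IsIntegral ℤ_[p] x₁ := hx₁int
      have h2 : IsIntegral ℤ_[p] (res₁ g x₁) := h1.map (res₁ g)
      have h3 := h2.map (IsScalarTower.toAlgHom K ↥L₁ L)
      simpa [IntermediateField.algebraMap_apply, mem_integralClosure_iff] using h3
    rw [hval g]
    have := A.smul_mem (⟨↑(res₁ g x₁), hw₁int⟩ : ↥(integralClosure ℤ_[p] L)) hw₂L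
    simpa [Subalgebra.smul_def, smul_eq_mul] using this
  -- ## conclusion
  refine ⟨?_, ?_, hsd⟩
  · have := hXA 1
    simpa using this
  · ext z
    simp only [SetLike.mem_coe, Set.mem_setOf_eq]
    constructor
    · intro hzA
      refine ⟨fun g => Algebra.trace K L (z * g X), fun g => ?_, hw z⟩
      have := (hA (z * g X)).mp (Submodule.mul_mem_mul hzA (hXA g)) 1 (Subalgebra.one_mem _)
      rwa [mul_one] at this
    · rintro ⟨c, hc, rfl⟩
      refine Submodule.sum_mem A fun g _ => ?_
      have hcg : c g • g X = (⟨algebraMap K L (c g), hmapint _ (hc g)⟩ :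
          ↥(integralClosure ℤ_[p] L)) • g X := by
        rw [Subalgebra.smul_def, smul_eq_mul, Algebra.smul_def]
      rw [hcg]
      exact A.smul_mem _ (hXA g)
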